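/- In the Delzant construction for a simple polytope Δ: for z ∈ ℂᴺ with φ_K(z) = j*(−η), the set {y_i : z_i = 0} is linearly independent, and consequently the stabilizer K_z = {[α] ∈ K : e^{2π√−1 αᵢ} = 1 for all i with z_i ≠ 0} is a finite group; hence j*(−η) is a regular value of the moment map φ_K. -/

import Mathlib

/-- In the Delzant construction for a simple polytope Δ: for
z ∈ ℂᴺ in the level set φ_K(z) = j*(−η), the normals yᵢ with zᵢ = 0 are
linearly independent; consequently the stabilizer
K_z = {[α] ∈ K : e^{2π√−1 αᵢ} = 1 for all i with zᵢ ≠ 0} is finite, and the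
level is regular (the differential of the K-moment map at z is surjective onto
𝔨*). -/
theorem delzant_level_regular
    {𝔱 : Type*} [AddCommGroup 𝔱] [Module ℝ 𝔱] [TopologicalSpace 𝔱]
    [IsTopologicalAddGroup 𝔱] [ContinuousSMul ℝ 𝔱]
    (ℓ : AddSubgroup 𝔱) (hℓclosed : IsClosed (ℓ : Set 𝔱)) [DiscreteTopology ℓ]
    {N : ℕ} (y : Fin N → 𝔱) (m : Fin N → ℕ) (hm : ∀ i, 0 < m i)
    (hy : ∀ i, (m i : ℝ) • y i ∈ ℓ) (η : Fin N → ℝ)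
    (Δ : Set (Module.Dual ℝ 𝔱))
    (hΔ : Δ = { β : Module.Dual ℝ 𝔱 | ∀ i, β ((m i : ℝ) • y i) ≤ η i })
    -- simplicity: at every point of Δ the active normals are independent
    (hsimple : ∀ β ∈ Δ, LinearIndependent ℝ
      (fun j : {i : Fin N // β ((m i : ℝ) • y i) = η i} => y j.1))
    (ϖ : (Fin N → ℝ) →ₗ[ℝ] 𝔱)
    (hϖ : ∀ x : Fin N → ℝ, ϖ x = ∑ i, x i • ((m i : ℝ) • y i))
    (ZN : AddSubgroup (Fin N → ℝ))
    (hZN : ZN = AddSubgroup.pi Set.univ (fun _ => AddSubgroup.zmultiples (1 : ℝ)))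
    (z : Fin N → ℂ)
    (hz : ∃ β ∈ Δ, ∀ i, ‖z i‖ ^ 2 = η i - β ((m i : ℝ) • y i)) :
    LinearIndependent ℝ (fun j : {i : Fin N // z i = 0} => y j.1) ∧
    Set.Finite ((fun α : Fin N → ℝ => (QuotientAddGroup.mk α : (Fin N → ℝ) ⧸ ZN)) ''
      { α : Fin N → ℝ | ϖ α ∈ ℓ ∧ ∀ i, z i ≠ 0 → ∃ k : ℤ, α i = (k : ℝ) }) ∧
    ∀ L : Module.Dual ℝ ↥(LinearMap.ker ϖ), ∃ w : Fin N → ℂ,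
      ∀ ξ : ↥(LinearMap.ker ϖ),
        L ξ = ∑ i, 2 * ((starRingEnd ℂ) (z i) * w i).re * (ξ : Fin N → ℝ) i := by
  classical
  obtain ⟨β, hβΔ, hβz⟩ := hz
  -- z i = 0 means the facet is active
  have hzero : ∀ i, z i = 0 → β ((m i : ℝ) • y i) = η i := by
    intro i hi
    have h := hβz i
    rw [hi] at h
    simp only [norm_zero] at h
    have h0 : (0:ℝ)^2 = 0 := by norm_num
    rw [h0] at h
    linarith
  -- Part 1: linear independence
  have h1 : LinearIndependent ℝ (fun j : {i : Fin N // z i = 0} => y j.1) := by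
    have hli := hsimple β hβΔ
    exact hli.comp
      (fun j : {i : Fin N // z i = 0} =>
        (⟨j.1, hzero j.1 j.2⟩ : {i : Fin N // β ((m i : ℝ) • y i) = η i}))
      (fun a b h => Subtype.ext (Subtype.mk_eq_mk.mp h))
  -- coefficient version for the scaled vectors
  have hcoef : ∀ g : {i : Fin N // z i = 0} → ℝ,
      ∑ j, g j • ((m j.1 : ℝ) • y j.1) = 0 → ∀ j, g j = 0 := by
    intro g hg j
    have h2 : ∑ j : {i : Fin N // z i = 0}, (g j * (m j.1 : ℝ)) • y j.1 = 0 := by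
      rw [← hg]
      exact Finset.sum_congr rfl fun j _ => mul_smul _ _ _
    have h3 := Fintype.linearIndependent_iff.mp h1 _ h2 j
    have hmj : (m j.1 : ℝ) ≠ 0 := Nat.cast_ne_zero.mpr (hm j.1).ne'
    exact (mul_eq_zero.mp h3).resolve_right hmj
  have hlv : LinearIndependent ℝ (fun j : {i : Fin N // z i = 0} => (m j.1 : ℝ) • y j.1) :=
    Fintype.linearIndependent_iff.mpr fun g hg j => hcoef g hg j
  -- kernel vectors supported on {z = 0} vanish
  have hker : ∀ δ : Fin N → ℝ, ϖ δ = 0 → (∀ i, z i ≠ 0 → δ i = 0) → δ = 0 := by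
    intro δ h0 hs
    have e1 : ∑ i ∈ Finset.univ.filter (fun i => z i = 0), δ i • ((m i : ℝ) • y i)
        = ∑ i, δ i • ((m i : ℝ) • y i) :=
      Finset.sum_filter_of_ne (fun x _ hne => by
        by_contra hzx
        exact hne (by rw [hs x hzx, zero_smul]))
    have e2 : ∑ i ∈ Finset.univ.filter (fun i => z i = 0), δ i • ((m i : ℝ) • y i)
        = ∑ j : {i : Fin N // z i = 0}, δ j.1 • ((m j.1 : ℝ) • y j.1) :=
      Finset.sum_subtype _ (by simp) _
    have hsum : ∑ j : {i : Fin N // z i = 0}, δ j.1 • ((m j.1 : ℝ) • y j.1) = 0 := by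
      rw [← e2, e1, ← hϖ, h0]
    funext i
    by_cases hzi : z i = 0
    · exact hcoef _ hsum ⟨i, hzi⟩
    · exact hs i hzi
  -- continuity of ϖ
  have hϖcont : Continuous fun x : Fin N → ℝ => ϖ x := by
    have hfe : (fun x : Fin N → ℝ => ϖ x) = fun x => ∑ i, x i • ((m i : ℝ) • y i) :=
      funext hϖ
    rw [hfe]
    exact continuous_finset_sum _ fun i _ => (continuous_apply i).smul continuous_const
  -- integer vectors map into ℓ
  have hint_mem : ∀ n : Fin N → ℤ, ϖ (fun i => (n i : ℝ)) ∈ ℓ := by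
    intro n
    rw [hϖ]
    refine AddSubgroup.sum_mem _ fun i _ => ?_
    rw [Int.cast_smul_eq_zsmul]
    exact AddSubgroup.zsmul_mem _ (hy i) _
  refine ⟨h1, ?_, ?_⟩
  -- Part 2: finiteness of the stabilizer
  · set Aset := { α : Fin N → ℝ | ϖ α ∈ ℓ ∧ ∀ i, z i ≠ 0 → ∃ k : ℤ, α i = (k : ℝ) } with hAset
    set B := Aset ∩ {α : Fin N → ℝ | ∀ i, α i ∈ Set.Ico (0:ℝ) 1} with hB
    have hKcomp : IsCompact ((fun x => ϖ x) '' Set.Icc (0 : Fin N → ℝ) 1) :=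
      isCompact_Icc.image hϖcont
    have hfinℓK : Set.Finite ((ℓ : Set 𝔱) ∩ ((fun x => ϖ x) '' Set.Icc (0 : Fin N → ℝ) 1)) :=
      (hKcomp.inter_left hℓclosed).finite
        (isDiscrete_iff_discreteTopology.mpr (DiscreteTopology.of_subset inferInstance Set.inter_subset_left))
    -- entries at z i ≠ 0 of elements of B vanish
    have hBzero : ∀ α ∈ B, ∀ i, z i ≠ 0 → α i = 0 := by
      rintro α ⟨⟨_, hint⟩, hbox⟩ i hi
      obtain ⟨k, hk⟩ := hint i hi
      have h01 := hbox i
      rw [hk] at h01 ⊢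
      have hk0 : (0:ℤ) ≤ k := by exact_mod_cast h01.1
      have hk1 : k < 1 := by exact_mod_cast h01.2
      have h1k : k = 0 := by omega
      rw [h1k]; norm_num
    have hBfin : Set.Finite B := by
      refine Set.Finite.of_finite_image (f := fun x => ϖ x) ?_ ?_
      · refine hfinℓK.subset ?_
        rintro _ ⟨α, hα, rfl⟩
        refine ⟨hα.1.1, ⟨α, ?_, rfl⟩⟩
        rw [Set.mem_Icc]
        exact ⟨fun i => (hα.2 i).1, fun i => le_of_lt (hα.2 i).2⟩
      · intro α hα α' hα' heq
        have heq' : ϖ α = ϖ α' := heq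
        have hδ : α - α' = 0 := by
          refine hker _ ?_ ?_
          · rw [map_sub, heq', sub_self]
          · intro i hi
            simp only [Pi.sub_apply, hBzero α hα i hi, hBzero α' hα' i hi, sub_zero]
        exact sub_eq_zero.mp hδ
    refine Set.Finite.subset (hBfin.image (fun α : Fin N → ℝ => (QuotientAddGroup.mk α : (Fin N → ℝ) ⧸ ZN))) ?_
    rintro q ⟨α, hα, rfl⟩
    refine ⟨fun i => α i - (⌊α i⌋ : ℝ), ⟨⟨?_, ?_⟩, ?_⟩, ?_⟩
    · have hrw : (fun i => α i - (⌊α i⌋ : ℝ)) = α - fun i => ((⌊α i⌋ : ℤ) : ℝ) := by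
        funext i; simp
      rw [hrw, map_sub]
      exact AddSubgroup.sub_mem _ hα.1 (hint_mem _)
    · intro i hi
      obtain ⟨k, hk⟩ := hα.2 i hi
      exact ⟨0, by simp only []; rw [hk, Int.floor_intCast]; simp⟩
    · intro i
      exact ⟨Int.fract_nonneg _, Int.fract_lt_one _⟩
    · show (QuotientAddGroup.mk _ : (Fin N → ℝ) ⧸ ZN) = QuotientAddGroup.mk α
      rw [QuotientAddGroup.eq]
      have hrw : -(fun i => α i - (⌊α i⌋ : ℝ)) + α = fun i => ((⌊α i⌋ : ℤ) : ℝ) := by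
        funext i
        simp only [Pi.add_apply, Pi.neg_apply]
        ring
      rw [hrw, hZN]
      intro i _
      exact AddSubgroup.mem_zmultiples_iff.mpr ⟨⌊α i⌋, by simp⟩
  -- Part 3: surjectivity of the differential
  · intro L
    obtain ⟨L', hL'⟩ := LinearMap.exists_extend L
    obtain ⟨β', hβ'⟩ := LinearMap.exists_extend
      ((Module.Basis.span hlv).constr ℝ
        (fun j : {i : Fin N // z i = 0} => L' (fun k => if j.1 = k then 1 else 0)))
    have hβ'v : ∀ i, (hi : z i = 0) →
        β' ((m i : ℝ) • y i) = L' (fun k => if i = k then 1 else 0) := by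
      intro i hi
      have h1' := LinearMap.congr_fun hβ' (Module.Basis.span hlv ⟨i, hi⟩)
      rw [LinearMap.comp_apply, Submodule.subtype_apply, Module.Basis.constr_basis,
        Module.Basis.span_apply] at h1'
      exact h1'
    set c : (Fin N → ℝ) →ₗ[ℝ] ℝ := L' - β' ∘ₗ ϖ with hc
    have hϖe : ∀ i : Fin N, ϖ (fun k => if i = k then 1 else 0) = (m i : ℝ) • y i := by
      intro i
      rw [hϖ, Finset.sum_eq_single i]
      · simp
      · intro j _ hj
        simp [if_neg (Ne.symm hj)]
      · simp
    have hczero : ∀ i, z i = 0 → c (fun k => if i = k then 1 else 0) = 0 := by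
      intro i hi
      rw [hc]
      simp only [LinearMap.sub_apply, LinearMap.comp_apply]
      rw [hϖe i, hβ'v i hi, sub_self]
    refine ⟨fun i => if z i = 0 then 0 else
      ((c (fun k => if i = k then 1 else 0) / (2 * Complex.normSq (z i)) : ℝ) : ℂ) * z i, ?_⟩
    intro ξ
    have hLξ : L ξ = c (ξ : Fin N → ℝ) := by
      have h1' : L ξ = L' (ξ : Fin N → ℝ) := by
        rw [← hL']; rfl
      rw [h1', hc]
      simp only [LinearMap.sub_apply, LinearMap.comp_apply]
      have hξ0 : ϖ (ξ : Fin N → ℝ) = 0 := ξ.2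
      rw [hξ0, map_zero, sub_zero]
    rw [hLξ, LinearMap.pi_apply_eq_sum_univ c (ξ : Fin N → ℝ)]
    refine Finset.sum_congr rfl fun i _ => ?_
    rw [smul_eq_mul, mul_comm]
    congr 1
    by_cases hi : z i = 0
    · rw [hczero i hi]
      simp [hi]
    · have hns : Complex.normSq (z i) ≠ 0 := (Complex.normSq_pos.mpr hi).ne'
      simp only [if_neg hi]
      have hrw : (starRingEnd ℂ) (z i) *
            (((c (fun k => if i = k then 1 else 0) / (2 * Complex.normSq (z i)) : ℝ) : ℂ) * z i)
          = ((c (fun k => if i = k then 1 else 0) / (2 * Complex.normSq (z i))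
              * Complex.normSq (z i) : ℝ) : ℂ) := by
        push_cast
        rw [mul_comm ((starRingEnd ℂ) (z i)), mul_assoc, Complex.mul_conj]
      rw [hrw, Complex.ofReal_re]
      field_simp
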